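/- arXiv:0708.4173 — 5 statements merged into one kernel-verified Lean document; each statement's English description precedes it below -/
import Mathlib

section
/- Given a recollement (S, T, U) and a Serre functor F on T with quasi-inverse F', the functor i_! := F' ∘ i_* ∘ i^! ∘ F ∘ i_* : S → T is left adjoint to i^* : T → S. -/
/-!
Setting: `k` a field; `S`, `T`, `U` skeletally small `k`-linear triangulated categories
with finite-dimensional Hom-spaces, `T` with split idempotents.  A recollement
`(S, T, U)` as in [BBD], and (right/left) Serre functors in the sense of
Reiten–Van den Bergh.
-/

open CategoryTheory CategoryTheory.Limits CategoryTheory.Pretriangulated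

universe v₁ v₂ v₃ u₁ u₂ u₃ u₄

/-- A right Serre structure on an endofunctor `F` of a `k`-linear category `C`:
isomorphisms `C(X, Y) ≅ C(Y, F X)^∨`, natural in `X` and `Y`.
A right Serre functor is a functor `F` equipped with such a structure. -/
structure RightSerreStructure (k : Type u₄) [Field k] (C : Type u₁) [Category.{v₁} C]
    [Preadditive C] [CategoryTheory.Linear k C] (F : C ⥤ C) where
  equiv : ∀ X Y : C, (X ⟶ Y) ≃ₗ[k] Module.Dual k (Y ⟶ F.obj X)
  naturality_left : ∀ {X X' Y : C} (f : X' ⟶ X) (φ : X ⟶ Y) (u : Y ⟶ F.obj X'),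
    equiv X' Y (f ≫ φ) u = equiv X Y φ (u ≫ F.map f)
  naturality_right : ∀ {X Y Y' : C} (φ : X ⟶ Y) (g : Y ⟶ Y') (u : Y' ⟶ F.obj X),
    equiv X Y' (φ ≫ g) u = equiv X Y φ (g ≫ u)

/-- A left Serre structure on an endofunctor `F'` of a `k`-linear category `C`:
isomorphisms `C(X, Y) ≅ C(F' Y, X)^∨`, natural in `X` and `Y`.
A left Serre functor is a functor `F'` equipped with such a structure. -/
structure LeftSerreStructure (k : Type u₄) [Field k] (C : Type u₁) [Category.{v₁} C]
    [Preadditive C] [CategoryTheory.Linear k C] (F' : C ⥤ C) where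
  equiv : ∀ X Y : C, (X ⟶ Y) ≃ₗ[k] Module.Dual k (F'.obj Y ⟶ X)
  naturality_left : ∀ {X X' Y : C} (f : X' ⟶ X) (φ : X ⟶ Y) (u : F'.obj Y ⟶ X'),
    equiv X' Y (f ≫ φ) u = equiv X Y φ (u ≫ f)
  naturality_right : ∀ {X Y Y' : C} (φ : X ⟶ Y) (g : Y ⟶ Y') (u : F'.obj Y' ⟶ X),
    equiv X Y' (φ ≫ g) u = equiv X Y φ (F'.map g ≫ u)

/-- A Serre functor: an essentially surjective right Serre functor. -/
structure SerreFunctor (k : Type u₄) [Field k] (C : Type u₁) [Category.{v₁} C]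
    [Preadditive C] [CategoryTheory.Linear k C] where
  F : C ⥤ C
  rightSerre : RightSerreStructure k C F
  essSurj : F.EssSurj

/-- A recollement of triangulated categories `(S, T, U)`:
triangulated functors `i_* = iSt : S ⥤ T`, `i^* = iUp, i^! = iSh : T ⥤ S`,
`j^* = jUp : T ⥤ U`, `j_! = jLo, j_* = jSt : U ⥤ T` with the adjunctions,
vanishing, full faithfulness and distinguished-triangle conditions of [BBD, sec. 1.4]. -/
structure Recollement (S : Type u₁) (T : Type u₂) (U : Type u₃)
    [Category.{v₁} S] [Category.{v₂} T] [Category.{v₃} U]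
    [HasZeroObject S] [HasZeroObject T] [HasZeroObject U]
    [Preadditive S] [Preadditive T] [Preadditive U]
    [HasShift S ℤ] [HasShift T ℤ] [HasShift U ℤ]
    [∀ n : ℤ, (shiftFunctor S n).Additive] [∀ n : ℤ, (shiftFunctor T n).Additive]
    [∀ n : ℤ, (shiftFunctor U n).Additive]
    [Pretriangulated S] [Pretriangulated T] [Pretriangulated U] where
  /-- `i_* : S ⥤ T` -/
  iSt : S ⥤ T
  /-- `i^* : T ⥤ S` -/
  iUp : T ⥤ S
  /-- `i^! : T ⥤ S` -/
  iSh : T ⥤ S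
  /-- `j^* : T ⥤ U` -/
  jUp : T ⥤ U
  /-- `j_! : U ⥤ T` -/
  jLo : U ⥤ T
  /-- `j_* : U ⥤ T` -/
  jSt : U ⥤ T
  [commShift_iSt : iSt.CommShift ℤ]
  [commShift_iUp : iUp.CommShift ℤ]
  [commShift_iSh : iSh.CommShift ℤ]
  [commShift_jUp : jUp.CommShift ℤ]
  [commShift_jLo : jLo.CommShift ℤ]
  [commShift_jSt : jSt.CommShift ℤ]
  [isTriangulated_iSt : iSt.IsTriangulated]
  [isTriangulated_iUp : iUp.IsTriangulated]
  [isTriangulated_iSh : iSh.IsTriangulated]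
  [isTriangulated_jUp : jUp.IsTriangulated]
  [isTriangulated_jLo : jLo.IsTriangulated]
  [isTriangulated_jSt : jSt.IsTriangulated]
  /-- `(i^*, i_*)` is an adjoint pair. -/
  adj₁ : iUp ⊣ iSt
  /-- `(i_*, i^!)` is an adjoint pair. -/
  adj₂ : iSt ⊣ iSh
  /-- `(j_!, j^*)` is an adjoint pair. -/
  adj₃ : jLo ⊣ jUp
  /-- `(j^*, j_*)` is an adjoint pair. -/
  adj₄ : jUp ⊣ jSt
  /-- `j^* ∘ i_* = 0`. -/
  zero_comp : ∀ X : S, IsZero (jUp.obj (iSt.obj X))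
  fullyFaithful_iSt : iSt.FullyFaithful
  fullyFaithful_jLo : jLo.FullyFaithful
  fullyFaithful_jSt : jSt.FullyFaithful
  /-- The distinguished triangle `i_* i^! X ⟶ X ⟶ j_* j^* X ⟶`, whose morphisms into and
  out of `X` are the counit of `(i_*, i^!)` and the unit of `(j^*, j_*)`. -/
  triangle_a : ∀ X : T, ∃ δ : jSt.obj (jUp.obj X) ⟶ (iSt.obj (iSh.obj X))⟦(1 : ℤ)⟧,
    Triangle.mk (adj₂.counit.app X) (adj₄.unit.app X) δ ∈ distTriang T
  /-- The distinguished triangle `j_! j^* X ⟶ X ⟶ i_* i^* X ⟶`, whose morphisms into and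
  out of `X` are the counit of `(j_!, j^*)` and the unit of `(i^*, i_*)`. -/
  triangle_b : ∀ X : T, ∃ δ : iSt.obj (iUp.obj X) ⟶ (jLo.obj (jUp.obj X))⟦(1 : ℤ)⟧,
    Triangle.mk (adj₃.counit.app X) (adj₁.unit.app X) δ ∈ distTriang T


section Aux

variable {k : Type u₄} [Field k]
variable {S : Type u₁} {T : Type u₂} {U : Type u₃}
  [Category.{v₁} S] [Category.{v₂} T] [Category.{v₃} U]
  [HasZeroObject S] [HasZeroObject T] [HasZeroObject U]
  [Preadditive S] [Preadditive T] [Preadditive U]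
  [HasShift S ℤ] [HasShift T ℤ] [HasShift U ℤ]
  [∀ n : ℤ, (shiftFunctor S n).Additive] [∀ n : ℤ, (shiftFunctor T n).Additive]
  [∀ n : ℤ, (shiftFunctor U n).Additive]
  [Pretriangulated S] [Pretriangulated T] [Pretriangulated U]

namespace RecollementAux

variable (R : Recollement S T U)

/-- Any morphism `j_! V ⟶ i_* C` is zero, since `j^* i_* = 0`. -/
lemma hom_jLo_iSt_eq_zero {V : U} {C : S} (q : R.jLo.obj V ⟶ R.iSt.obj C) : q = 0 :=
  (R.adj₃.homEquiv V (R.iSt.obj C)).injective ((R.zero_comp C).eq_of_tgt _ _)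

/-- Precomposition with the unit `X ⟶ i_* i^* X` is injective on morphisms into
objects of the form `i_* C`. -/
lemma unit_precomp_injective {X : T} {C : S}
    {m m' : R.iSt.obj (R.iUp.obj X) ⟶ R.iSt.obj C}
    (h : R.adj₁.unit.app X ≫ m = R.adj₁.unit.app X ≫ m') : m = m' := by
  obtain ⟨δ, hT⟩ := R.triangle_b X
  have hd : R.adj₁.unit.app X ≫ (m - m') = 0 := by
    rw [Preadditive.comp_sub, h, sub_self]
  obtain ⟨e, he⟩ := Triangle.yoneda_exact₃ _ hT (m - m') hd
  have hcs := R.commShift_jLo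
  have a := (R.jLo.commShiftIso (1 : ℤ)).app (R.jUp.obj X)
  have h0 : a.hom ≫ e = 0 := hom_jLo_iSt_eq_zero R (a.hom ≫ e)
  have he0 : e = 0 := by
    have : e = a.inv ≫ (a.hom ≫ e) := by exact (Iso.inv_hom_id_assoc a e).symm
    rw [this, h0, Limits.comp_zero]; rfl
  have : m - m' = 0 := by rw [he, he0, Limits.comp_zero]; rfl
  exact sub_eq_zero.mp this

variable [CategoryTheory.Linear k T]
variable (SF : SerreFunctor k T) (F' : T ⥤ T) (ε : F' ⋙ SF.F ≅ 𝟭 T)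

/-- `B := F (i_* A)`. -/
abbrev BB (A : S) : T := SF.F.obj (R.iSt.obj A)

/-- `Z := i_* i^! F (i_* A)`, so that `i_! A = F' Z`. -/
abbrev ZZ (A : S) : T := R.iSt.obj (R.iSh.obj (BB R SF A))

/-- `E X := i_* i^* X`. -/
abbrev EE (X : T) : T := R.iSt.obj (R.iUp.obj X)

/-- The map `g ↦ i_* i^* g`, characterized by `η ≫ Ê g = g ≫ η`. -/
lemma unit_naturality' {X Y : T} (g : X ⟶ Y) :
    R.adj₁.unit.app X ≫ R.iSt.map (R.iUp.map g) = g ≫ R.adj₁.unit.app Y :=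
  (R.adj₁.unit.naturality g).symm

lemma Emap_add {X Y : T} (g g' : X ⟶ Y) :
    R.iSt.map (R.iUp.map (g + g')) = R.iSt.map (R.iUp.map g) + R.iSt.map (R.iUp.map g') := by
  apply unit_precomp_injective R (X := X) (C := R.iUp.obj Y)
  rw [unit_naturality', Preadditive.comp_add, unit_naturality', unit_naturality',
    Preadditive.add_comp]

lemma Emap_smul {X Y : T} (c : k) (g : X ⟶ Y) :
    R.iSt.map (R.iUp.map (c • g)) = c • R.iSt.map (R.iUp.map g) := by
  apply unit_precomp_injective R (X := X) (C := R.iUp.obj Y)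
  rw [unit_naturality', Linear.comp_smul, unit_naturality', Linear.smul_comp]

/-- The adjunction transpose `(X ⟶ Z) ≃ (E X ⟶ B)` for the composite adjunction
`i_* i^* ⊣ i_* i^!`. -/
def tE (A : S) (X : T) : (X ⟶ ZZ R SF A) ≃ (EE R X ⟶ BB R SF A) :=
  (R.adj₁.homEquiv X (R.iSh.obj (BB R SF A))).symm.trans
    (R.adj₂.homEquiv (R.iUp.obj X) (BB R SF A)).symm

lemma tE_symm_apply (A : S) (X : T) (u : EE R X ⟶ BB R SF A) :
    (tE R SF A X).symm u =
      (R.adj₁.homEquiv X (R.iSh.obj (BB R SF A)))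
        ((R.adj₂.homEquiv (R.iUp.obj X) (BB R SF A)) u) := rfl

lemma tE_apply (A : S) (X : T) (g : X ⟶ ZZ R SF A) :
    tE R SF A X g = R.iSt.map (R.iUp.map g) ≫
      (R.iSt.map (R.adj₁.counit.app (R.iSh.obj (BB R SF A))) ≫
        R.adj₂.counit.app (BB R SF A)) := by
  dsimp [tE]
  rw [Adjunction.homEquiv_counit, Adjunction.homEquiv_counit, Functor.map_comp,
    Category.assoc]

/-- The transpose as a `k`-linear equivalence. -/
def tLin (A : S) (X : T) : (X ⟶ ZZ R SF A) ≃ₗ[k] (EE R X ⟶ BB R SF A) where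
  toFun := tE R SF A X
  map_add' g g' := by
    show tE R SF A X (g + g') = tE R SF A X g + tE R SF A X g'
    rw [tE_apply, tE_apply, tE_apply, Emap_add, Preadditive.add_comp]
  map_smul' c g := by
    show tE R SF A X (c • g) = c • tE R SF A X g
    rw [tE_apply, tE_apply, Emap_smul, Linear.smul_comp]
  invFun := (tE R SF A X).symm
  left_inv := (tE R SF A X).left_inv
  right_inv := (tE R SF A X).right_inv

lemma tLin_symm_apply (A : S) (X : T) (u : EE R X ⟶ BB R SF A) :
    (tLin R SF A X (k := k)).symm u = (tE R SF A X).symm u := rfl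

/-- Postcomposition with an isomorphism, as a linear equivalence. -/
def postcompEquiv {X Y Y' : T} (i : Y ≅ Y') : (X ⟶ Y) ≃ₗ[k] (X ⟶ Y') where
  toFun g := g ≫ i.hom
  map_add' g g' := by
    show (g + g') ≫ i.hom = g ≫ i.hom + g' ≫ i.hom
    rw [Preadditive.add_comp]
  map_smul' c g := by
    show (c • g) ≫ i.hom = c • (g ≫ i.hom)
    rw [Linear.smul_comp]
  invFun g := g ≫ i.inv
  left_inv g := by simp
  right_inv g := by simp

/-- `(X ⟶ Z) ≃ₗ (X ⟶ F F' Z)` via `ε⁻¹`. -/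
def qq (A : S) (X : T) :
    (X ⟶ ZZ R SF A) ≃ₗ[k] (X ⟶ SF.F.obj (F'.obj (ZZ R SF A))) :=
  postcompEquiv (k := k)
    (show ZZ R SF A ≅ SF.F.obj (F'.obj (ZZ R SF A)) from (ε.app (ZZ R SF A)).symm)

lemma qq_apply (A : S) (X : T) (g : X ⟶ ZZ R SF A) :
    qq R SF F' ε A X g = g ≫ ε.inv.app (ZZ R SF A) := rfl

/-- The desired hom-equivalence `(i_! A ⟶ X) ≃ (A ⟶ i^* X)`. -/
def homEq (A : S) (X : T) : (F'.obj (ZZ R SF A) ⟶ X) ≃ (A ⟶ R.iUp.obj X) :=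
  (((SF.rightSerre.equiv (F'.obj (ZZ R SF A)) X).trans
      ((qq R SF F' ε A X).dualMap)).trans
    (((tLin R SF A X (k := k)).symm.dualMap).trans
      (SF.rightSerre.equiv (R.iSt.obj A) (EE R X)).symm)).toEquiv.trans
    (R.fullyFaithful_iSt.homEquiv).symm

lemma homEq_spec (A : S) (X : T) (φ : F'.obj (ZZ R SF A) ⟶ X)
    (u : EE R X ⟶ BB R SF A) :
    SF.rightSerre.equiv (R.iSt.obj A) (EE R X)
        (R.iSt.map (homEq R SF F' ε A X φ)) u =
      SF.rightSerre.equiv (F'.obj (ZZ R SF A)) X φ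
        ((tE R SF A X).symm u ≫ ε.inv.app (ZZ R SF A)) := by
  have h1 : R.iSt.map (homEq R SF F' ε A X φ) =
      (SF.rightSerre.equiv (R.iSt.obj A) (EE R X)).symm
        (((tLin R SF A X (k := k)).symm.dualMap)
          ((qq R SF F' ε A X).dualMap
            (SF.rightSerre.equiv (F'.obj (ZZ R SF A)) X φ))) := by
    have : R.iSt.map (homEq R SF F' ε A X φ) =
        R.fullyFaithful_iSt.homEquiv
          ((R.fullyFaithful_iSt.homEquiv).symm
            ((SF.rightSerre.equiv (R.iSt.obj A) (EE R X)).symm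
              (((tLin R SF A X (k := k)).symm.dualMap)
                ((qq R SF F' ε A X).dualMap
                  (SF.rightSerre.equiv (F'.obj (ZZ R SF A)) X φ))))) := rfl
    rw [this, Equiv.apply_symm_apply]
  rw [h1, LinearEquiv.apply_symm_apply]
  rw [LinearEquiv.dualMap_apply, LinearEquiv.dualMap_apply]
  rw [tLin_symm_apply, qq_apply]

lemma homEq_uniq (A : S) (X : T) (φ : F'.obj (ZZ R SF A) ⟶ X) (h : A ⟶ R.iUp.obj X)
    (hh : ∀ u : EE R X ⟶ BB R SF A,
      SF.rightSerre.equiv (R.iSt.obj A) (EE R X) (R.iSt.map h) u =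
        SF.rightSerre.equiv (F'.obj (ZZ R SF A)) X φ
          ((tE R SF A X).symm u ≫ ε.inv.app (ZZ R SF A))) :
    h = homEq R SF F' ε A X φ := by
  have h2 : R.iSt.map h = R.iSt.map (homEq R SF F' ε A X φ) := by
    apply (SF.rightSerre.equiv (R.iSt.obj A) (EE R X)).injective
    apply LinearMap.ext
    intro u
    rw [hh u, homEq_spec]
  exact R.fullyFaithful_iSt.map_injective h2

lemma tE_symm_natural_right (A : S) {X X' : T} (g : X ⟶ X')
    (u : EE R X' ⟶ BB R SF A) :
    (tE R SF A X).symm (R.iSt.map (R.iUp.map g) ≫ u) = g ≫ (tE R SF A X').symm u := by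
  rw [tE_symm_apply, tE_symm_apply]
  rw [Adjunction.homEquiv_naturality_left R.adj₂ (R.iUp.map g) u]
  rw [Adjunction.homEquiv_naturality_left R.adj₁ g]

lemma tE_symm_natural_left {A A' : S} (f : A' ⟶ A) (X : T)
    (u : EE R X ⟶ BB R SF A') :
    (tE R SF A X).symm (u ≫ SF.F.map (R.iSt.map f)) =
      (tE R SF A' X).symm u ≫ R.iSt.map (R.iSh.map (SF.F.map (R.iSt.map f))) := by
  rw [tE_symm_apply, tE_symm_apply]
  rw [Adjunction.homEquiv_naturality_right R.adj₂ u (SF.F.map (R.iSt.map f))]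
  rw [Adjunction.homEquiv_naturality_right R.adj₁]

lemma homEq_natural_right (A : S) {X X' : T} (φ : F'.obj (ZZ R SF A) ⟶ X)
    (g : X ⟶ X') :
    homEq R SF F' ε A X' (φ ≫ g) = homEq R SF F' ε A X φ ≫ R.iUp.map g := by
  symm
  apply homEq_uniq
  intro u
  rw [Functor.map_comp]
  rw [SF.rightSerre.naturality_right (R.iSt.map (homEq R SF F' ε A X φ))
    (R.iSt.map (R.iUp.map g)) u]
  rw [homEq_spec R SF F' ε A X φ (R.iSt.map (R.iUp.map g) ≫ u)]
  rw [tE_symm_natural_right, Category.assoc]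
  rw [← SF.rightSerre.naturality_right φ g]

lemma homEq_natural_left {A' A : S} (f : A' ⟶ A) (X : T)
    (φ : F'.obj (ZZ R SF A) ⟶ X) :
    homEq R SF F' ε A' X
        ((R.iSt ⋙ SF.F ⋙ R.iSh ⋙ R.iSt ⋙ F').map f ≫ φ) =
      f ≫ homEq R SF F' ε A X φ := by
  symm
  apply homEq_uniq
  intro u
  have hmap : R.iSt.map (f ≫ homEq R SF F' ε A X φ) =
      R.iSt.map f ≫ R.iSt.map (homEq R SF F' ε A X φ) := R.iSt.map_comp _ _
  rw [hmap]
  rw [SF.rightSerre.naturality_left (R.iSt.map f)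
    (R.iSt.map (homEq R SF F' ε A X φ)) u]
  rw [homEq_spec R SF F' ε A X φ (u ≫ SF.F.map (R.iSt.map f))]
  rw [tE_symm_natural_left]
  have hLmap : (R.iSt ⋙ SF.F ⋙ R.iSh ⋙ R.iSt ⋙ F').map f =
      F'.map (R.iSt.map (R.iSh.map (SF.F.map (R.iSt.map f)))) := rfl
  rw [hLmap]
  rw [SF.rightSerre.naturality_left
    (F'.map (R.iSt.map (R.iSh.map (SF.F.map (R.iSt.map f))))) φ]
  congr 1
  have hε := ε.inv.naturality (R.iSt.map (R.iSh.map (SF.F.map (R.iSt.map f))))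
  dsimp at hε
  rw [Category.assoc, Category.assoc, ← hε]

end RecollementAux

end Aux

/-- Given a recollement `(S, T, U)` and a Serre functor `F` on `T` with quasi-inverse `F'`,
the functor `i_! := F' ∘ i_* ∘ i^! ∘ F ∘ i_* : S ⥤ T` is left adjoint to `i^* : T ⥤ S`. -/
theorem recollement_left_adjoint_of_iUp
    {k : Type u₄} [Field k]
    {S : Type u₁} {T : Type u₂} {U : Type u₃}
    [Category.{v₁} S] [Category.{v₂} T] [Category.{v₃} U]
    [HasZeroObject S] [HasZeroObject T] [HasZeroObject U]
    [Preadditive S] [Preadditive T] [Preadditive U]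
    [CategoryTheory.Linear k S] [CategoryTheory.Linear k T] [CategoryTheory.Linear k U]
    [HasShift S ℤ] [HasShift T ℤ] [HasShift U ℤ]
    [∀ n : ℤ, (shiftFunctor S n).Additive] [∀ n : ℤ, (shiftFunctor T n).Additive]
    [∀ n : ℤ, (shiftFunctor U n).Additive]
    [Pretriangulated S] [Pretriangulated T] [Pretriangulated U]
    [EssentiallySmall.{v₁} S] [EssentiallySmall.{v₂} T] [EssentiallySmall.{v₃} U]
    [∀ X Y : S, FiniteDimensional k (X ⟶ Y)]
    [∀ X Y : T, FiniteDimensional k (X ⟶ Y)]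
    [∀ X Y : U, FiniteDimensional k (X ⟶ Y)]
    [IsIdempotentComplete T]
    (R : Recollement S T U)
    (SF : SerreFunctor k T) (F' : T ⥤ T)
    (η : SF.F ⋙ F' ≅ 𝟭 T) (ε : F' ⋙ SF.F ≅ 𝟭 T) :
    Nonempty ((R.iSt ⋙ SF.F ⋙ R.iSh ⋙ R.iSt ⋙ F') ⊣ R.iUp) := by
  classical
  open RecollementAux in
  exact ⟨Adjunction.mkOfHomEquiv
    { homEquiv := homEq R SF F' ε
      homEquiv_naturality_left_symm := by
        intro A' A X f g
        have h1 := homEq_natural_left R SF F' ε f X ((homEq R SF F' ε A X).symm g)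
        rw [Equiv.apply_symm_apply] at h1
        exact ((homEq R SF F' ε A' X).symm_apply_eq).mpr h1.symm
      homEquiv_naturality_right := by
        intro A X X' φ g
        exact homEq_natural_right R SF F' ε A φ g }⟩
end

section
/- Given a recollement (S, T, U) and a Serre functor F on T with quasi-inverse F', the functor j^? := j^* ∘ F' ∘ j_* ∘ j^* ∘ F : T → U is left adjoint to j_! : U → T. -/
/-!
Setting: `k` a field; `S`, `T`, `U` skeletally small `k`-linear triangulated categories
with finite-dimensional Hom-spaces, `T` with split idempotents.  A recollement
`(S, T, U)` as in [BBD], and (right/left) Serre functors in the sense of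
Reiten–Van den Bergh.
-/

open CategoryTheory CategoryTheory.Limits CategoryTheory.Pretriangulated

universe v₁ v₂ v₃ u₁ u₂ u₃ u₄

namespace RecSerreAux

/-- Post-composition with an isomorphism, as a `k`-linear equivalence of Hom-spaces. -/
@[simps]
def postcompLinear (k : Type u₄) [Field k] {C : Type u₁} [Category.{v₁} C]
    [Preadditive C] [CategoryTheory.Linear k C] (A : C) {B B' : C} (g : B ≅ B') :
    (A ⟶ B) ≃ₗ[k] (A ⟶ B') where
  toFun m := m ≫ g.hom
  invFun m := m ≫ g.inv
  map_add' m m' := by simp [Preadditive.add_comp]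
  map_smul' c m := by simp
  left_inv m := by simp
  right_inv m := by simp

section

variable {k : Type u₄} [Field k]
variable {S : Type u₁} {T : Type u₂} {U : Type u₃}
variable [Category.{v₁} S] [Category.{v₂} T] [Category.{v₃} U]
variable [HasZeroObject S] [HasZeroObject T] [HasZeroObject U]
variable [Preadditive S] [Preadditive T] [Preadditive U]
variable [CategoryTheory.Linear k T]
variable [HasShift S ℤ] [HasShift T ℤ] [HasShift U ℤ]
variable [∀ n : ℤ, (shiftFunctor S n).Additive] [∀ n : ℤ, (shiftFunctor T n).Additive]
variable [∀ n : ℤ, (shiftFunctor U n).Additive]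
variable [Pretriangulated S] [Pretriangulated T] [Pretriangulated U]
variable (R : Recollement S T U)

/-- Cancellation of the unit of `j^* ⊣ j_*` against morphisms into the image of `j_*`. -/
lemma unit_comp_cancel {A : T} {Z : U} {u v : R.jSt.obj (R.jUp.obj A) ⟶ R.jSt.obj Z}
    (h : R.adj₄.unit.app A ≫ u = R.adj₄.unit.app A ≫ v) : u = v := by
  have hu := R.fullyFaithful_jSt.map_preimage u
  have hv := R.fullyFaithful_jSt.map_preimage v
  have key : R.fullyFaithful_jSt.preimage u = R.fullyFaithful_jSt.preimage v := by
    apply (R.adj₄.homEquiv A Z).injective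
    rw [Adjunction.homEquiv_unit, Adjunction.homEquiv_unit, hu, hv]
    exact h
  rw [← hu, ← hv, key]

/-- The composite `j_* j^*` is `k`-linear on Hom-spaces. -/
lemma jStjUp_map_smul {A B : T} (c : k) (f : A ⟶ B) :
    R.jSt.map (R.jUp.map (c • f)) = c • R.jSt.map (R.jUp.map f) := by
  apply unit_comp_cancel R
  have n1 := R.adj₄.unit.naturality f
  have n2 := R.adj₄.unit.naturality (c • f)
  dsimp at n1 n2
  rw [← n2, Linear.smul_comp, n1, ← Linear.comp_smul]

/-- The composite `j_* j^*` is additive on Hom-spaces. -/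
lemma jStjUp_map_add {A B : T} (f g : A ⟶ B) :
    R.jSt.map (R.jUp.map (f + g)) = R.jSt.map (R.jUp.map f) + R.jSt.map (R.jUp.map g) := by
  apply unit_comp_cancel R
  have n1 := R.adj₄.unit.naturality f
  have n2 := R.adj₄.unit.naturality g
  have n3 := R.adj₄.unit.naturality (f + g)
  dsimp at n1 n2 n3
  rw [← n3, Preadditive.add_comp, n1, n2, ← Preadditive.comp_add]

/-- The bijection `Hom(j_! V, Y) ≃ Hom(j_* V, j_* j^* Y)`. -/
def lamEquiv (V : U) (Y : T) :
    (R.jLo.obj V ⟶ Y) ≃ (R.jSt.obj V ⟶ R.jSt.obj (R.jUp.obj Y)) :=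
  (R.adj₃.homEquiv V Y).trans R.fullyFaithful_jSt.homEquiv

lemma lamEquiv_apply (V : U) (Y : T) (h : R.jLo.obj V ⟶ Y) :
    lamEquiv R V Y h = R.jSt.map ((R.adj₃.homEquiv V Y) h) := rfl

lemma lamEquiv_eq (V : U) (Y : T) (h : R.jLo.obj V ⟶ Y) :
    lamEquiv R V Y h
      = R.jSt.map (R.adj₃.unit.app V) ≫ R.jSt.map (R.jUp.map h) := by
  rw [lamEquiv_apply, Adjunction.homEquiv_unit, Functor.map_comp]

/-- The bijection `Hom(j_! V, Y) ≃ Hom(j_* V, j_* j^* Y)` is `k`-linear. -/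
noncomputable def lamLinear (V : U) (Y : T) :
    (R.jLo.obj V ⟶ Y) ≃ₗ[k] (R.jSt.obj V ⟶ R.jSt.obj (R.jUp.obj Y)) :=
  LinearEquiv.ofBijective
    { toFun := lamEquiv R V Y
      map_add' := fun f g => by
        show lamEquiv R V Y (f + g) = lamEquiv R V Y f + lamEquiv R V Y g
        rw [lamEquiv_eq, lamEquiv_eq, lamEquiv_eq, jStjUp_map_add R, Preadditive.comp_add]
      map_smul' := fun c f => by
        show lamEquiv R V Y (c • f) = c • lamEquiv R V Y f
        rw [lamEquiv_eq, lamEquiv_eq, jStjUp_map_smul R, Linear.comp_smul] }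
    (lamEquiv R V Y).bijective

@[simp] lemma lamLinear_apply (V : U) (Y : T) (h : R.jLo.obj V ⟶ Y) :
    lamLinear (k := k) R V Y h = lamEquiv R V Y h := rfl

variable (SF : SerreFunctor k T) (F' : T ⥤ T) (ε : F' ⋙ SF.F ≅ 𝟭 T)

/-- The isomorphism `C ≅ F F' C` for `C = j_* j^* F X`, coming from `ε`. -/
@[simps]
def epsIso (X : T) :
    R.jSt.obj (R.jUp.obj (SF.F.obj X))
      ≅ SF.F.obj (F'.obj (R.jSt.obj (R.jUp.obj (SF.F.obj X)))) where
  hom := ε.inv.app _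
  inv := ε.hom.app _
  hom_inv_id := by simp
  inv_hom_id := by simp

/-- The hom-set bijection exhibiting `j^* F' j_* j^* F` as left adjoint to `j_!`. -/
noncomputable def mainEquiv (X : T) (V : U) :
    (R.jUp.obj (F'.obj (R.jSt.obj (R.jUp.obj (SF.F.obj X)))) ⟶ V) ≃ (X ⟶ R.jLo.obj V) :=
  (R.adj₄.homEquiv _ V).trans <|
    (SF.rightSerre.equiv _ _).toEquiv.trans <|
      ((postcompLinear k (R.jSt.obj V) (epsIso R SF F' ε X)).dualMap).toEquiv.trans <|
        ((lamLinear (k := k) R V (SF.F.obj X)).dualMap).toEquiv.trans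
          (SF.rightSerre.equiv X (R.jLo.obj V)).symm.toEquiv

lemma mainEquiv_eval (X : T) (V : U)
    (w : R.jUp.obj (F'.obj (R.jSt.obj (R.jUp.obj (SF.F.obj X)))) ⟶ V)
    (h : R.jLo.obj V ⟶ SF.F.obj X) :
    SF.rightSerre.equiv X (R.jLo.obj V) (mainEquiv R SF F' ε X V w) h
      = SF.rightSerre.equiv _ _ (R.adj₄.homEquiv _ V w)
          (lamEquiv R V (SF.F.obj X) h
            ≫ ε.inv.app (R.jSt.obj (R.jUp.obj (SF.F.obj X)))) := by
  simp only [mainEquiv, Equiv.trans_apply, LinearEquiv.coe_toEquiv,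
    LinearEquiv.apply_symm_apply]
  rfl

lemma mainEquiv_natural_right (X : T) {V V' : U}
    (u : R.jUp.obj (F'.obj (R.jSt.obj (R.jUp.obj (SF.F.obj X)))) ⟶ V) (g : V ⟶ V') :
    mainEquiv R SF F' ε X V' (u ≫ g) = mainEquiv R SF F' ε X V u ≫ R.jLo.map g := by
  apply (SF.rightSerre.equiv X (R.jLo.obj V')).injective
  apply LinearMap.ext; intro h
  rw [mainEquiv_eval,
    SF.rightSerre.naturality_right (mainEquiv R SF F' ε X V u) (R.jLo.map g) h,
    mainEquiv_eval, Adjunction.homEquiv_naturality_right,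
    SF.rightSerre.naturality_right]
  congr 1
  rw [lamEquiv_apply, lamEquiv_apply, Adjunction.homEquiv_naturality_left,
    Functor.map_comp, Category.assoc]

lemma mainEquiv_natural_left {X' X : T} (f : X' ⟶ X) (V : U)
    (u : R.jUp.obj (F'.obj (R.jSt.obj (R.jUp.obj (SF.F.obj X)))) ⟶ V) :
    mainEquiv R SF F' ε X' V
        (R.jUp.map (F'.map (R.jSt.map (R.jUp.map (SF.F.map f)))) ≫ u)
      = f ≫ mainEquiv R SF F' ε X V u := by
  apply (SF.rightSerre.equiv X' (R.jLo.obj V)).injective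
  apply LinearMap.ext; intro h
  rw [mainEquiv_eval, Adjunction.homEquiv_naturality_left,
    SF.rightSerre.naturality_left (F'.map (R.jSt.map (R.jUp.map (SF.F.map f))))
      (R.adj₄.homEquiv _ V u),
    SF.rightSerre.naturality_left f (mainEquiv R SF F' ε X V u) h,
    mainEquiv_eval]
  congr 1
  have nat := ε.inv.naturality (R.jSt.map (R.jUp.map (SF.F.map f)))
  dsimp at nat
  rw [Category.assoc, ← nat, lamEquiv_apply, lamEquiv_apply,
    Adjunction.homEquiv_naturality_right, Functor.map_comp, Category.assoc]

end

end RecSerreAux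

/-- Given a recollement `(S, T, U)` and a Serre functor `F` on `T` with quasi-inverse `F'`,
the functor `j^? := j^* ∘ F' ∘ j_* ∘ j^* ∘ F : T ⥤ U` is left adjoint to `j_! : U ⥤ T`. -/
theorem recollement_left_adjoint_of_jLo
    {k : Type u₄} [Field k]
    {S : Type u₁} {T : Type u₂} {U : Type u₃}
    [Category.{v₁} S] [Category.{v₂} T] [Category.{v₃} U]
    [HasZeroObject S] [HasZeroObject T] [HasZeroObject U]
    [Preadditive S] [Preadditive T] [Preadditive U]
    [CategoryTheory.Linear k S] [CategoryTheory.Linear k T] [CategoryTheory.Linear k U]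
    [HasShift S ℤ] [HasShift T ℤ] [HasShift U ℤ]
    [∀ n : ℤ, (shiftFunctor S n).Additive] [∀ n : ℤ, (shiftFunctor T n).Additive]
    [∀ n : ℤ, (shiftFunctor U n).Additive]
    [Pretriangulated S] [Pretriangulated T] [Pretriangulated U]
    [EssentiallySmall.{v₁} S] [EssentiallySmall.{v₂} T] [EssentiallySmall.{v₃} U]
    [∀ X Y : S, FiniteDimensional k (X ⟶ Y)]
    [∀ X Y : T, FiniteDimensional k (X ⟶ Y)]
    [∀ X Y : U, FiniteDimensional k (X ⟶ Y)]
    [IsIdempotentComplete T]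
    (R : Recollement S T U)
    (SF : SerreFunctor k T) (F' : T ⥤ T)
    (η : SF.F ⋙ F' ≅ 𝟭 T) (ε : F' ⋙ SF.F ≅ 𝟭 T) :
    Nonempty ((SF.F ⋙ R.jUp ⋙ R.jSt ⋙ F' ⋙ R.jUp) ⊣ R.jLo) := by
  refine ⟨Adjunction.mkOfHomEquiv
    { homEquiv := fun X V => RecSerreAux.mainEquiv R SF F' ε X V
      homEquiv_naturality_left_symm := ?_
      homEquiv_naturality_right := fun {X V V'} u g =>
        RecSerreAux.mainEquiv_natural_right R SF F' ε X u g }⟩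
  intro X' X V f g
  apply (RecSerreAux.mainEquiv R SF F' ε X' V).injective
  have h2 := RecSerreAux.mainEquiv_natural_left R SF F' ε f V
    ((RecSerreAux.mainEquiv R SF F' ε X V).symm g)
  rw [Equiv.apply_symm_apply] at h2
  exact (Equiv.apply_symm_apply (RecSerreAux.mainEquiv R SF F' ε X' V) (f ≫ g)).trans h2.symm
end

section
/- Given a recollement (S, T, U) and a Serre functor F on T with quasi-inverse F', the functor i_? := F ∘ i_* ∘ i^* ∘ F' ∘ i_* : S → T is right adjoint to i^! : T → S. -/
/-!
Setting: `k` a field; `S`, `T`, `U` skeletally small `k`-linear triangulated categories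
with finite-dimensional Hom-spaces, `T` with split idempotents.  A recollement
`(S, T, U)` as in [BBD], and (right/left) Serre functors in the sense of
Reiten–Van den Bergh.
-/

open CategoryTheory CategoryTheory.Limits CategoryTheory.Pretriangulated

universe v₁ v₂ v₃ u₁ u₂ u₃ u₄

/-! ### Auxiliary constructions for the proof -/

section Aux
set_option linter.unusedSectionVars false

variable {k : Type u₄} [Field k]
  {S : Type u₁} {T : Type u₂} {U : Type u₃}
  [Category.{v₁} S] [Category.{v₂} T] [Category.{v₃} U]
  [HasZeroObject S] [HasZeroObject T] [HasZeroObject U]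
  [Preadditive S] [Preadditive T] [Preadditive U]
  [CategoryTheory.Linear k T]
  [HasShift S ℤ] [HasShift T ℤ] [HasShift U ℤ]
  [∀ n : ℤ, (shiftFunctor S n).Additive] [∀ n : ℤ, (shiftFunctor T n).Additive]
  [∀ n : ℤ, (shiftFunctor U n).Additive]
  [Pretriangulated S] [Pretriangulated T] [Pretriangulated U]
  [∀ X Y : T, FiniteDimensional k (X ⟶ Y)]

/-- Two maps between objects in the image of a Serre functor agree if they are not
distinguished by the Serre pairing. -/
private lemma serre_ext (SF : SerreFunctor k T) {P Q : T}
    {d e : SF.F.obj P ⟶ SF.F.obj Q}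
    (h : ∀ φ : Q ⟶ SF.F.obj P, SF.rightSerre.equiv Q (SF.F.obj P) φ d
        = SF.rightSerre.equiv Q (SF.F.obj P) φ e) : d = e := by
  rw [← sub_eq_zero, ← Module.forall_dual_apply_eq_zero_iff k (d - e)]
  intro ψ
  obtain ⟨φ, rfl⟩ := (SF.rightSerre.equiv Q (SF.F.obj P)).surjective ψ
  rw [map_sub, h φ, sub_self]

private lemma serre_F_map (SF : SerreFunctor k T) {P Q : T} (g : P ⟶ Q)
    (φ : Q ⟶ SF.F.obj P) :
    SF.rightSerre.equiv Q (SF.F.obj P) φ (SF.F.map g)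
      = SF.rightSerre.equiv P (SF.F.obj P) (g ≫ φ) (𝟙 (SF.F.obj P)) := by
  rw [SF.rightSerre.naturality_left g φ (𝟙 _), Category.id_comp]

/-- A Serre functor is `k`-linear on morphisms. -/
private lemma F_map_smul (SF : SerreFunctor k T) {P Q : T} (α : k) (f : P ⟶ Q) :
    SF.F.map (α • f) = α • SF.F.map f := by
  refine serre_ext SF fun φ => ?_
  rw [map_smul, serre_F_map, serre_F_map, Linear.smul_comp, map_smul,
    LinearMap.smul_apply]

/-- A Serre functor is additive on morphisms. -/
private lemma F_map_add (SF : SerreFunctor k T) {P Q : T} (f g : P ⟶ Q) :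
    SF.F.map (f + g) = SF.F.map f + SF.F.map g := by
  refine serre_ext SF fun φ => ?_
  rw [map_add, serre_F_map, serre_F_map, serre_F_map, Preadditive.add_comp, map_add,
    LinearMap.add_apply]

private lemma iSt_comp_counit_injective (R : Recollement S T U) {V : S} {X : T}
    {t₁ t₂ : R.iSt.obj V ⟶ R.iSt.obj (R.iSh.obj X)}
    (h : t₁ ≫ R.adj₂.counit.app X = t₂ ≫ R.adj₂.counit.app X) : t₁ = t₂ := by
  obtain ⟨s₁, rfl⟩ := R.fullyFaithful_iSt.map_surjective t₁
  obtain ⟨s₂, rfl⟩ := R.fullyFaithful_iSt.map_surjective t₂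
  have h' : (R.adj₂.homEquiv V X).symm s₁ = (R.adj₂.homEquiv V X).symm s₂ := by
    simpa only [Adjunction.homEquiv_counit] using h
  rw [(R.adj₂.homEquiv V X).symm.injective h']

/-- The composite `i_* ∘ i^!` is `k`-linear on morphisms. -/
private lemma H_map_smul (R : Recollement S T U) {P Q : T} (α : k) (f : P ⟶ Q) :
    R.iSt.map (R.iSh.map (α • f)) = α • R.iSt.map (R.iSh.map f) := by
  apply iSt_comp_counit_injective R
  have n1 := R.adj₂.counit.naturality (α • f)
  have n2 := R.adj₂.counit.naturality f
  simp only [Functor.comp_map, Functor.id_map] at n1 n2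
  rw [n1, Linear.comp_smul, ← n2, ← Linear.smul_comp]

/-- The composite `i_* ∘ i^!` is additive on morphisms. -/
private lemma H_map_add (R : Recollement S T U) {P Q : T} (f g : P ⟶ Q) :
    R.iSt.map (R.iSh.map (f + g)) = R.iSt.map (R.iSh.map f) + R.iSt.map (R.iSh.map g) := by
  apply iSt_comp_counit_injective R
  have n1 := R.adj₂.counit.naturality (f + g)
  have n2 := R.adj₂.counit.naturality f
  have n3 := R.adj₂.counit.naturality g
  simp only [Functor.comp_map, Functor.id_map] at n1 n2 n3
  rw [n1, Preadditive.comp_add, ← n2, ← n3, ← Preadditive.add_comp]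

/-- The adjunction `F' ⊣ F` coming from the quasi-inverse data. -/
private def adjFF' (SF : SerreFunctor k T) (F' : T ⥤ T) (η : SF.F ⋙ F' ≅ 𝟭 T)
    (ε : F' ⋙ SF.F ≅ 𝟭 T) : F' ⊣ SF.F :=
  (CategoryTheory.Equivalence.mk F' SF.F ε.symm η).toAdjunction

variable (R : Recollement S T U) (SF : SerreFunctor k T) (F' : T ⥤ T)
  (η : SF.F ⋙ F' ≅ 𝟭 T) (ε : F' ⋙ SF.F ≅ 𝟭 T)

/-- The chain of adjunction equivalences
`(i_* i^* F' i_* Y ⟶ X) ≃ (i_* Y ⟶ F i_* i^! X)`. -/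
private def cEquiv (X : T) (Y : S) :
    (R.iSt.obj (R.iUp.obj (F'.obj (R.iSt.obj Y))) ⟶ X) ≃
      (R.iSt.obj Y ⟶ SF.F.obj (R.iSt.obj (R.iSh.obj X))) :=
  (R.adj₂.homEquiv (R.iUp.obj (F'.obj (R.iSt.obj Y))) X).trans
    ((R.adj₁.homEquiv (F'.obj (R.iSt.obj Y)) (R.iSh.obj X)).trans
      ((adjFF' SF F' η ε).homEquiv (R.iSt.obj Y) (R.iSt.obj (R.iSh.obj X))))

private lemma cEquiv_smul (X : T) (Y : S) (α : k)
    (a : R.iSt.obj (R.iUp.obj (F'.obj (R.iSt.obj Y))) ⟶ X) :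
    cEquiv R SF F' η ε X Y (α • a) = α • cEquiv R SF F' η ε X Y a := by
  simp only [cEquiv, Equiv.trans_apply, Adjunction.homEquiv_unit, Functor.map_comp,
    Category.assoc]
  rw [H_map_smul R α a]
  simp only [Linear.comp_smul, F_map_smul SF, Functor.map_comp, Category.assoc]

private lemma cEquiv_add (X : T) (Y : S)
    (a b : R.iSt.obj (R.iUp.obj (F'.obj (R.iSt.obj Y))) ⟶ X) :
    cEquiv R SF F' η ε X Y (a + b)
      = cEquiv R SF F' η ε X Y a + cEquiv R SF F' η ε X Y b := by
  simp only [cEquiv, Equiv.trans_apply, Adjunction.homEquiv_unit, Functor.map_comp,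
    Category.assoc]
  rw [H_map_add R a b]
  simp only [Preadditive.comp_add, F_map_add SF, Functor.map_comp, Category.assoc]

/-- `cEquiv` as a `k`-linear equivalence. -/
private def cLin (X : T) (Y : S) :
    (R.iSt.obj (R.iUp.obj (F'.obj (R.iSt.obj Y))) ⟶ X) ≃ₗ[k]
      (R.iSt.obj Y ⟶ SF.F.obj (R.iSt.obj (R.iSh.obj X))) :=
  { cEquiv R SF F' η ε X Y with
    map_add' := cEquiv_add R SF F' η ε X Y
    map_smul' := cEquiv_smul R SF F' η ε X Y }

/-- The "transposed" Serre duality `(Q ⟶ F P) ≃ₗ (P ⟶ Q)^∨`. -/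
private noncomputable def tauEquiv (P Q : T) :
    (Q ⟶ SF.F.obj P) ≃ₗ[k] Module.Dual k (P ⟶ Q) :=
  (Module.evalEquiv k (Q ⟶ SF.F.obj P)).trans (SF.rightSerre.equiv P Q).dualMap

private lemma tauEquiv_apply (P Q : T) (u : Q ⟶ SF.F.obj P) (a : P ⟶ Q) :
    tauEquiv SF P Q u a = SF.rightSerre.equiv P Q a u := by
  simp [tauEquiv, Module.Dual.eval_apply]

/-- The hom-equivalence exhibiting `i_? := F i_* i^* F' i_*` as right adjoint of `i^!`. -/
private noncomputable def theta (X : T) (Y : S) :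
    (R.iSh.obj X ⟶ Y) ≃
      (X ⟶ SF.F.obj (R.iSt.obj (R.iUp.obj (F'.obj (R.iSt.obj Y))))) :=
  R.fullyFaithful_iSt.homEquiv.trans
    ((SF.rightSerre.equiv (R.iSt.obj (R.iSh.obj X)) (R.iSt.obj Y)).toEquiv.trans
      (((cLin R SF F' η ε X Y).dualMap.toEquiv).trans
        ((tauEquiv SF (R.iSt.obj (R.iUp.obj (F'.obj (R.iSt.obj Y)))) X).symm.toEquiv)))

private lemma theta_spec (X : T) (Y : S) (g : R.iSh.obj X ⟶ Y)
    (a : R.iSt.obj (R.iUp.obj (F'.obj (R.iSt.obj Y))) ⟶ X) :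
    SF.rightSerre.equiv (R.iSt.obj (R.iUp.obj (F'.obj (R.iSt.obj Y)))) X a
        (theta R SF F' η ε X Y g)
      = SF.rightSerre.equiv (R.iSt.obj (R.iSh.obj X)) (R.iSt.obj Y) (R.iSt.map g)
          (cEquiv R SF F' η ε X Y a) := by
  rw [← tauEquiv_apply]
  simp only [theta, Equiv.trans_apply, LinearEquiv.coe_toEquiv,
    Functor.FullyFaithful.homEquiv_apply]
  rw [LinearEquiv.apply_symm_apply, LinearEquiv.dualMap_apply]
  rfl

private lemma cEquiv_natY {X : T} {Y Y' : S} (h : Y ⟶ Y')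
    (a : R.iSt.obj (R.iUp.obj (F'.obj (R.iSt.obj Y'))) ⟶ X) :
    cEquiv R SF F' η ε X Y (R.iSt.map (R.iUp.map (F'.map (R.iSt.map h))) ≫ a)
      = R.iSt.map h ≫ cEquiv R SF F' η ε X Y' a := by
  simp only [cEquiv, Equiv.trans_apply]
  rw [Adjunction.homEquiv_naturality_left, Adjunction.homEquiv_naturality_left,
    Adjunction.homEquiv_naturality_left]

private lemma cEquiv_natX {X X' : T} {Y : S} (r : X' ⟶ X)
    (a : R.iSt.obj (R.iUp.obj (F'.obj (R.iSt.obj Y))) ⟶ X') :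
    cEquiv R SF F' η ε X Y (a ≫ r)
      = cEquiv R SF F' η ε X' Y a ≫ SF.F.map (R.iSt.map (R.iSh.map r)) := by
  simp only [cEquiv, Equiv.trans_apply]
  rw [Adjunction.homEquiv_naturality_right, Adjunction.homEquiv_naturality_right,
    Adjunction.homEquiv_naturality_right]

private lemma theta_natY {X : T} {Y Y' : S} (g : R.iSh.obj X ⟶ Y) (h : Y ⟶ Y') :
    theta R SF F' η ε X Y' (g ≫ h)
      = theta R SF F' η ε X Y g
          ≫ SF.F.map (R.iSt.map (R.iUp.map (F'.map (R.iSt.map h)))) := by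
  refine (tauEquiv SF _ X).injective (LinearMap.ext fun a => ?_)
  rw [tauEquiv_apply, tauEquiv_apply, theta_spec,
    ← SF.rightSerre.naturality_left (R.iSt.map (R.iUp.map (F'.map (R.iSt.map h)))) a
      (theta R SF F' η ε X Y g),
    theta_spec, cEquiv_natY,
    ← SF.rightSerre.naturality_right (R.iSt.map g) (R.iSt.map h)
      (cEquiv R SF F' η ε X Y' a),
    Functor.map_comp]

private lemma theta_natX {X X' : T} {Y : S} (r : X' ⟶ X) (g : R.iSh.obj X ⟶ Y) :
    theta R SF F' η ε X' Y (R.iSh.map r ≫ g) = r ≫ theta R SF F' η ε X Y g := by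
  refine (tauEquiv SF _ X').injective (LinearMap.ext fun a => ?_)
  rw [tauEquiv_apply, tauEquiv_apply, theta_spec,
    ← SF.rightSerre.naturality_right a r (theta R SF F' η ε X Y g),
    theta_spec, cEquiv_natX,
    ← SF.rightSerre.naturality_left (R.iSt.map (R.iSh.map r)) (R.iSt.map g)
      (cEquiv R SF F' η ε X' Y a),
    Functor.map_comp]

end Aux

/-- Given a recollement `(S, T, U)` and a Serre functor `F` on `T` with quasi-inverse `F'`,
the functor `i_? := F ∘ i_* ∘ i^* ∘ F' ∘ i_* : S ⥤ T` is right adjoint to `i^! : T ⥤ S`. -/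
theorem recollement_right_adjoint_of_iSh
    {k : Type u₄} [Field k]
    {S : Type u₁} {T : Type u₂} {U : Type u₃}
    [Category.{v₁} S] [Category.{v₂} T] [Category.{v₃} U]
    [HasZeroObject S] [HasZeroObject T] [HasZeroObject U]
    [Preadditive S] [Preadditive T] [Preadditive U]
    [CategoryTheory.Linear k S] [CategoryTheory.Linear k T] [CategoryTheory.Linear k U]
    [HasShift S ℤ] [HasShift T ℤ] [HasShift U ℤ]
    [∀ n : ℤ, (shiftFunctor S n).Additive] [∀ n : ℤ, (shiftFunctor T n).Additive]
    [∀ n : ℤ, (shiftFunctor U n).Additive]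
    [Pretriangulated S] [Pretriangulated T] [Pretriangulated U]
    [EssentiallySmall.{v₁} S] [EssentiallySmall.{v₂} T] [EssentiallySmall.{v₃} U]
    [∀ X Y : S, FiniteDimensional k (X ⟶ Y)]
    [∀ X Y : T, FiniteDimensional k (X ⟶ Y)]
    [∀ X Y : U, FiniteDimensional k (X ⟶ Y)]
    [IsIdempotentComplete T]
    (R : Recollement S T U)
    (SF : SerreFunctor k T) (F' : T ⥤ T)
    (η : SF.F ⋙ F' ≅ 𝟭 T) (ε : F' ⋙ SF.F ≅ 𝟭 T) :
    Nonempty (R.iSh ⊣ (R.iSt ⋙ F' ⋙ R.iUp ⋙ R.iSt ⋙ SF.F)) := by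
  constructor
  refine Adjunction.mkOfHomEquiv
    { homEquiv := fun X Y => theta R SF F' η ε X Y
      homEquiv_naturality_left_symm := ?_
      homEquiv_naturality_right := ?_ }
  · intro X' X Y f g
    dsimp only [Functor.comp_obj]
    apply (theta R SF F' η ε X' Y).injective
    rw [Equiv.apply_symm_apply, theta_natX, Equiv.apply_symm_apply]
  · intro X Y Y' g h
    dsimp only [Functor.comp_obj, Functor.comp_map]
    exact theta_natY R SF F' η ε g h
end

section
/- Given a recollement (S, T, U) and a Serre functor F on T with quasi-inverse F', the functor j^! := j^* ∘ F ∘ j_! ∘ j^* ∘ F' : T → U is right adjoint to j_* : U → T. -/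
/-!
Setting: `k` a field; `S`, `T`, `U` skeletally small `k`-linear triangulated categories
with finite-dimensional Hom-spaces, `T` with split idempotents.  A recollement
`(S, T, U)` as in [BBD], and (right/left) Serre functors in the sense of
Reiten–Van den Bergh.
-/

open CategoryTheory CategoryTheory.Limits CategoryTheory.Pretriangulated

universe v₁ v₂ v₃ u₁ u₂ u₃ u₄

/-! ### Auxiliary machinery for the proof -/

set_option linter.unusedSectionVars false

namespace RecollementSerreAux

open Module

variable {k : Type u₄} [Field k]
variable {T : Type u₂} {U : Type u₃} [Category.{v₂} T] [Category.{v₃} U]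
variable [Preadditive T] [CategoryTheory.Linear k T]
variable [∀ X Y : T, FiniteDimensional k (X ⟶ Y)]

/-- Postcomposition with an isomorphism, as a `k`-linear equivalence. -/
def rightCompEquiv (X : T) {Y Y' : T} (e : Y ≅ Y') : (X ⟶ Y) ≃ₗ[k] (X ⟶ Y') where
  toFun f := f ≫ e.hom
  map_add' f g := by simp
  map_smul' a f := by simp
  invFun f := f ≫ e.inv
  left_inv f := by simp
  right_inv f := by simp

/-- Morphisms into an object of the form `F.obj X₀` are separated by the Serre pairing. -/
theorem serre_ext (F : T ⥤ T) (SS : RightSerreStructure k T F) {X₀ Y : T}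
    {m₁ m₂ : Y ⟶ F.obj X₀}
    (h : ∀ u : X₀ ⟶ Y, SS.equiv X₀ Y u m₁ = SS.equiv X₀ Y u m₂) : m₁ = m₂ := by
  apply (Module.evalEquiv k (Y ⟶ F.obj X₀)).injective
  ext χ
  have h2 := h ((SS.equiv X₀ Y).symm χ)
  rw [LinearEquiv.apply_symm_apply] at h2
  simpa only [Module.evalEquiv_apply, Module.Dual.eval_apply] using h2

/-- Postcomposition with the counit of `j_! ⊣ j^*` is injective on morphisms out of the
image of `j_!`. -/
theorem postcomp_counit_inj (jUp : T ⥤ U) (jLo : U ⥤ T) (adj₃ : jLo ⊣ jUp)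
    (ffLo : jLo.FullyFaithful) {B : U} {Y : T}
    {d₁ d₂ : jLo.obj B ⟶ jLo.obj (jUp.obj Y)}
    (h : d₁ ≫ adj₃.counit.app Y = d₂ ≫ adj₃.counit.app Y) : d₁ = d₂ := by
  haveI := ffLo.full
  haveI := ffLo.faithful
  haveI : IsIso adj₃.unit := inferInstance
  have tri := adj₃.right_triangle_components Y
  have e1 : inv (adj₃.unit.app (jUp.obj Y)) = jUp.map (adj₃.counit.app Y) :=
    IsIso.inv_eq_of_hom_inv_id tri
  haveI : IsIso (jUp.map (adj₃.counit.app Y)) := e1 ▸ inferInstance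
  have h2 := congrArg (adj₃.homEquiv B Y) h
  rw [adj₃.homEquiv_naturality_right, adj₃.homEquiv_naturality_right, cancel_mono] at h2
  exact (adj₃.homEquiv B _).injective h2

theorem Kmap_smul (jUp : T ⥤ U) (jLo : U ⥤ T) (adj₃ : jLo ⊣ jUp)
    (ffLo : jLo.FullyFaithful) (a : k) {Y Z : T} (g : Y ⟶ Z) :
    jLo.map (jUp.map (a • g)) = a • jLo.map (jUp.map g) := by
  apply postcomp_counit_inj jUp jLo adj₃ ffLo
  have h1 := adj₃.counit.naturality (a • g)
  have h2 := adj₃.counit.naturality g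
  simp only [Functor.comp_map, Functor.id_map] at h1 h2
  rw [h1, CategoryTheory.Linear.smul_comp, h2, CategoryTheory.Linear.comp_smul]

theorem Kmap_add (jUp : T ⥤ U) (jLo : U ⥤ T) (adj₃ : jLo ⊣ jUp)
    (ffLo : jLo.FullyFaithful) {Y Z : T} (g₁ g₂ : Y ⟶ Z) :
    jLo.map (jUp.map (g₁ + g₂)) = jLo.map (jUp.map g₁) + jLo.map (jUp.map g₂) := by
  apply postcomp_counit_inj jUp jLo adj₃ ffLo
  have h1 := adj₃.counit.naturality (g₁ + g₂)
  have h2 := adj₃.counit.naturality g₁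
  have h3 := adj₃.counit.naturality g₂
  simp only [Functor.comp_map, Functor.id_map] at h1 h2 h3
  rw [h1, Preadditive.add_comp, h2, h3, Preadditive.comp_add]

/-- The bijection `(F' X ⟶ j_* A) ≃ (j_! j^* F' X ⟶ j_! A)` coming from the adjunction
`(j^*, j_*)` and full faithfulness of `j_!`. -/
def thetaEquiv (jUp : T ⥤ U) (jLo jSt : U ⥤ T) (adj₄ : jUp ⊣ jSt)
    (ffLo : jLo.FullyFaithful) (F' : T ⥤ T) (A : U) (X : T) :
    (F'.obj X ⟶ jSt.obj A) ≃ (jLo.obj (jUp.obj (F'.obj X)) ⟶ jLo.obj A) :=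
  ((adj₄.homEquiv (F'.obj X) A).symm).trans ffLo.homEquiv

theorem thetaEquiv_apply (jUp : T ⥤ U) (jLo jSt : U ⥤ T) (adj₄ : jUp ⊣ jSt)
    (ffLo : jLo.FullyFaithful) (F' : T ⥤ T) (A : U) (X : T)
    (g : F'.obj X ⟶ jSt.obj A) :
    thetaEquiv jUp jLo jSt adj₄ ffLo F' A X g
      = jLo.map (jUp.map g) ≫ jLo.map (adj₄.counit.app A) := by
  simp [thetaEquiv, Adjunction.homEquiv_counit]

/-- `thetaEquiv` as a `k`-linear equivalence. -/
def thetaLinear (jUp : T ⥤ U) (jLo jSt : U ⥤ T) (adj₃ : jLo ⊣ jUp) (adj₄ : jUp ⊣ jSt)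
    (ffLo : jLo.FullyFaithful) (F' : T ⥤ T) (A : U) (X : T) :
    (F'.obj X ⟶ jSt.obj A) ≃ₗ[k] (jLo.obj (jUp.obj (F'.obj X)) ⟶ jLo.obj A) :=
  { thetaEquiv jUp jLo jSt adj₄ ffLo F' A X with
    map_add' := fun g₁ g₂ => by
      simp only [Equiv.toFun_as_coe, thetaEquiv_apply jUp jLo jSt adj₄ ffLo F',
        Kmap_add jUp jLo adj₃ ffLo, Preadditive.add_comp]
    map_smul' := fun a g => by
      simp only [Equiv.toFun_as_coe, thetaEquiv_apply jUp jLo jSt adj₄ ffLo F',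
        Kmap_smul jUp jLo adj₃ ffLo, CategoryTheory.Linear.smul_comp, RingHom.id_apply] }

theorem thetaLinear_apply (jUp : T ⥤ U) (jLo jSt : U ⥤ T) (adj₃ : jLo ⊣ jUp)
    (adj₄ : jUp ⊣ jSt) (ffLo : jLo.FullyFaithful) (F' : T ⥤ T) (A : U) (X : T)
    (g : F'.obj X ⟶ jSt.obj A) :
    thetaLinear (k := k) jUp jLo jSt adj₃ adj₄ ffLo F' A X g
      = jLo.map (jUp.map g) ≫ jLo.map (adj₄.counit.app A) :=
  thetaEquiv_apply jUp jLo jSt adj₄ ffLo F' A X g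

/-- The linear equivalence `(F' X ⟶ j_* A) ≃ (j_* A ⟶ X)^∨`: Serre duality on `T`
composed with `ε`. -/
def serreP (jSt : U ⥤ T) (F F' : T ⥤ T) (SS : RightSerreStructure k T F)
    (ε : F' ⋙ F ≅ 𝟭 T) (A : U) (X : T) :
    (F'.obj X ⟶ jSt.obj A) ≃ₗ[k] Dual k (jSt.obj A ⟶ X) :=
  (SS.equiv (F'.obj X) (jSt.obj A)).trans
    ((rightCompEquiv (k := k) (jSt.obj A) (ε.app X).symm).dualMap)

/-- The main linear equivalence `(j_* A ⟶ X) ≃ (j_! A ⟶ F j_! j^* F' X)`. -/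
noncomputable def bigLinear (jUp : T ⥤ U) (jLo jSt : U ⥤ T) (adj₃ : jLo ⊣ jUp) (adj₄ : jUp ⊣ jSt)
    (ffLo : jLo.FullyFaithful) (F F' : T ⥤ T) (SS : RightSerreStructure k T F)
    (ε : F' ⋙ F ≅ 𝟭 T) (A : U) (X : T) :
    (jSt.obj A ⟶ X) ≃ₗ[k] (jLo.obj A ⟶ F.obj (jLo.obj (jUp.obj (F'.obj X)))) :=
  (Module.evalEquiv k _).trans <|
    ((serreP jSt F F' SS ε A X).dualMap).trans <|
      (((thetaLinear (k := k) jUp jLo jSt adj₃ adj₄ ffLo F' A X).symm).dualMap).trans <|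
        (((SS.equiv (jLo.obj (jUp.obj (F'.obj X))) (jLo.obj A)).dualMap).symm.trans
          (Module.evalEquiv k _).symm)

theorem bigLinear_char (jUp : T ⥤ U) (jLo jSt : U ⥤ T) (adj₃ : jLo ⊣ jUp)
    (adj₄ : jUp ⊣ jSt) (ffLo : jLo.FullyFaithful) (F F' : T ⥤ T)
    (SS : RightSerreStructure k T F) (ε : F' ⋙ F ≅ 𝟭 T) (A : U) (X : T)
    (φ : jSt.obj A ⟶ X) (g : F'.obj X ⟶ jSt.obj A) :
    SS.equiv (jLo.obj (jUp.obj (F'.obj X))) (jLo.obj A)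
        (thetaLinear (k := k) jUp jLo jSt adj₃ adj₄ ffLo F' A X g)
        (bigLinear jUp jLo jSt adj₃ adj₄ ffLo F F' SS ε A X φ)
      = SS.equiv (F'.obj X) (jSt.obj A) g (φ ≫ ε.inv.app X) := by
  simp only [bigLinear, LinearEquiv.trans_apply, Module.apply_evalEquiv_symm_apply,
    LinearEquiv.dualMap_symm, LinearEquiv.dualMap_apply, LinearEquiv.symm_apply_apply,
    Module.evalEquiv_apply, Module.Dual.eval_apply, serreP, rightCompEquiv,
    LinearEquiv.coe_mk, Iso.symm_hom, Iso.app_inv]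
  rfl

theorem bigLinear_natural_right (jUp : T ⥤ U) (jLo jSt : U ⥤ T) (adj₃ : jLo ⊣ jUp)
    (adj₄ : jUp ⊣ jSt) (ffLo : jLo.FullyFaithful) (F F' : T ⥤ T)
    (SS : RightSerreStructure k T F) (ε : F' ⋙ F ≅ 𝟭 T) (A : U) {X X' : T}
    (φ : jSt.obj A ⟶ X) (x : X ⟶ X') :
    bigLinear jUp jLo jSt adj₃ adj₄ ffLo F F' SS ε A X' (φ ≫ x)
      = bigLinear jUp jLo jSt adj₃ adj₄ ffLo F F' SS ε A X φ
          ≫ F.map (jLo.map (jUp.map (F'.map x))) := by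
  apply serre_ext F SS
  intro u
  obtain ⟨g', rfl⟩ : ∃ g', thetaLinear (k := k) jUp jLo jSt adj₃ adj₄ ffLo F' A X' g' = u :=
    ⟨(thetaLinear (k := k) jUp jLo jSt adj₃ adj₄ ffLo F' A X').symm u, by simp⟩
  rw [bigLinear_char]
  rw [← SS.naturality_left (jLo.map (jUp.map (F'.map x)))]
  have comp1 : jLo.map (jUp.map (F'.map x))
        ≫ thetaLinear (k := k) jUp jLo jSt adj₃ adj₄ ffLo F' A X' g'
      = thetaLinear (k := k) jUp jLo jSt adj₃ adj₄ ffLo F' A X (F'.map x ≫ g') := by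
    rw [thetaLinear_apply, thetaLinear_apply, ← Category.assoc, ← jLo.map_comp, ← jUp.map_comp]
  rw [comp1, bigLinear_char, SS.naturality_left (F'.map x)]
  congr 1
  have hnat : x ≫ ε.inv.app X' = ε.inv.app X ≫ F.map (F'.map x) := by
    simpa using ε.inv.naturality x
  rw [Category.assoc, hnat, Category.assoc]

theorem bigLinear_natural_left (jUp : T ⥤ U) (jLo jSt : U ⥤ T) (adj₃ : jLo ⊣ jUp)
    (adj₄ : jUp ⊣ jSt) (ffLo : jLo.FullyFaithful) (F F' : T ⥤ T)
    (SS : RightSerreStructure k T F) (ε : F' ⋙ F ≅ 𝟭 T) {A' A : U} (X : T)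
    (a : A' ⟶ A) (φ : jSt.obj A ⟶ X) :
    bigLinear jUp jLo jSt adj₃ adj₄ ffLo F F' SS ε A' X (jSt.map a ≫ φ)
      = jLo.map a ≫ bigLinear jUp jLo jSt adj₃ adj₄ ffLo F F' SS ε A X φ := by
  apply serre_ext F SS
  intro u
  obtain ⟨g, rfl⟩ : ∃ g, thetaLinear (k := k) jUp jLo jSt adj₃ adj₄ ffLo F' A' X g = u :=
    ⟨(thetaLinear (k := k) jUp jLo jSt adj₃ adj₄ ffLo F' A' X).symm u, by simp⟩
  rw [bigLinear_char]
  rw [← SS.naturality_right _ (jLo.map a)]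
  have comp2 : thetaLinear (k := k) jUp jLo jSt adj₃ adj₄ ffLo F' A' X g ≫ jLo.map a
      = thetaLinear (k := k) jUp jLo jSt adj₃ adj₄ ffLo F' A X (g ≫ jSt.map a) := by
    rw [thetaLinear_apply, thetaLinear_apply]
    have hc : adj₄.counit.app A' ≫ a = jUp.map (jSt.map a) ≫ adj₄.counit.app A := by
      simpa using (adj₄.counit.naturality a).symm
    rw [Category.assoc, ← jLo.map_comp, hc, jLo.map_comp, ← Category.assoc, ← jLo.map_comp,
      ← jUp.map_comp]
  rw [comp2, bigLinear_char, SS.naturality_right g (jSt.map a), Category.assoc]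

/-- The main abstract statement: `j_*` is left adjoint to `j^* ∘ F ∘ j_! ∘ j^* ∘ F'`. -/
theorem main (jUp : T ⥤ U) (jLo jSt : U ⥤ T) (adj₃ : jLo ⊣ jUp) (adj₄ : jUp ⊣ jSt)
    (ffLo : jLo.FullyFaithful) (F F' : T ⥤ T) (SS : RightSerreStructure k T F)
    (ε : F' ⋙ F ≅ 𝟭 T) :
    Nonempty (jSt ⊣ (F' ⋙ jUp ⋙ jLo ⋙ F ⋙ jUp)) := by
  refine ⟨Adjunction.mkOfHomEquiv ⟨fun A X =>
    (bigLinear jUp jLo jSt adj₃ adj₄ ffLo F F' SS ε A X).toEquiv.trans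
      (adj₃.homEquiv A (F.obj (jLo.obj (jUp.obj (F'.obj X))))), ?_, ?_⟩⟩
  · intro A' A X a g
    rw [Equiv.symm_apply_eq]
    simp only [Equiv.trans_apply, Equiv.symm_trans_apply, LinearEquiv.coe_toEquiv,
      LinearEquiv.coe_toEquiv_symm]
    rw [bigLinear_natural_left jUp jLo jSt adj₃ adj₄ ffLo F F' SS ε X a]
    erw [Adjunction.homEquiv_naturality_left]
    simp
  · intro A X X' f g
    beta_reduce
    simp only [Equiv.trans_apply, LinearEquiv.coe_toEquiv]
    rw [bigLinear_natural_right jUp jLo jSt adj₃ adj₄ ffLo F F' SS ε A f g]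
    erw [Adjunction.homEquiv_naturality_right]
    rfl

end RecollementSerreAux


/-- Given a recollement `(S, T, U)` and a Serre functor `F` on `T` with quasi-inverse `F'`,
the functor `j^! := j^* ∘ F ∘ j_! ∘ j^* ∘ F' : T ⥤ U` is right adjoint to `j_* : U ⥤ T`. -/
theorem recollement_right_adjoint_of_jSt
    {k : Type u₄} [Field k]
    {S : Type u₁} {T : Type u₂} {U : Type u₃}
    [Category.{v₁} S] [Category.{v₂} T] [Category.{v₃} U]
    [HasZeroObject S] [HasZeroObject T] [HasZeroObject U]
    [Preadditive S] [Preadditive T] [Preadditive U]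
    [CategoryTheory.Linear k S] [CategoryTheory.Linear k T] [CategoryTheory.Linear k U]
    [HasShift S ℤ] [HasShift T ℤ] [HasShift U ℤ]
    [∀ n : ℤ, (shiftFunctor S n).Additive] [∀ n : ℤ, (shiftFunctor T n).Additive]
    [∀ n : ℤ, (shiftFunctor U n).Additive]
    [Pretriangulated S] [Pretriangulated T] [Pretriangulated U]
    [EssentiallySmall.{v₁} S] [EssentiallySmall.{v₂} T] [EssentiallySmall.{v₃} U]
    [∀ X Y : S, FiniteDimensional k (X ⟶ Y)]
    [∀ X Y : T, FiniteDimensional k (X ⟶ Y)]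
    [∀ X Y : U, FiniteDimensional k (X ⟶ Y)]
    [IsIdempotentComplete T]
    (R : Recollement S T U)
    (SF : SerreFunctor k T) (F' : T ⥤ T)
    (η : SF.F ⋙ F' ≅ 𝟭 T) (ε : F' ⋙ SF.F ≅ 𝟭 T) :
    Nonempty (R.jSt ⊣ (F' ⋙ R.jUp ⋙ R.jLo ⋙ SF.F ⋙ R.jUp)) :=
  RecollementSerreAux.main R.jUp R.jLo R.jSt R.adj₃ R.adj₄ R.fullyFaithful_jLo
    SF.F F' SF.rightSerre ε
end

section
/- Given a recollement (S, T, U) and a Serre functor F on T with quasi-inverse F', there are isomorphisms Hom_T(F' i_* G X, Y) ≅ Hom_S(X, i^* Y), natural in X ∈ S and Y ∈ T, where G := i^! ∘ F ∘ i_* is the induced Serre functor on S. -/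
/-!
Setting: `k` a field; `S`, `T`, `U` skeletally small `k`-linear triangulated categories
with finite-dimensional Hom-spaces, `T` with split idempotents.  A recollement
`(S, T, U)` as in [BBD], and (right/left) Serre functors in the sense of
Reiten–Van den Bergh.
-/

open CategoryTheory CategoryTheory.Limits CategoryTheory.Pretriangulated

universe v₁ v₂ v₃ u₁ u₂ u₃ u₄

namespace RecSerreAux

set_option linter.unusedSectionVars false

variable {k : Type u₄} [Field k]
    {S : Type u₁} {T : Type u₂} {U : Type u₃}
    [Category.{v₁} S] [Category.{v₂} T] [Category.{v₃} U]
    [HasZeroObject S] [HasZeroObject T] [HasZeroObject U]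
    [Preadditive S] [Preadditive T] [Preadditive U]
    [CategoryTheory.Linear k S] [CategoryTheory.Linear k T] [CategoryTheory.Linear k U]
    [HasShift S ℤ] [HasShift T ℤ] [HasShift U ℤ]
    [∀ n : ℤ, (shiftFunctor S n).Additive] [∀ n : ℤ, (shiftFunctor T n).Additive]
    [∀ n : ℤ, (shiftFunctor U n).Additive]
    [Pretriangulated S] [Pretriangulated T] [Pretriangulated U]
    [∀ X Y : T, FiniteDimensional k (X ⟶ Y)]
    (R : Recollement S T U) (SF : SerreFunctor k T) (F' : T ⥤ T)
    (η : SF.F ⋙ F' ≅ 𝟭 T) (ε : F' ⋙ SF.F ≅ 𝟭 T)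

/-- The adjunction `F' ⊣ F` coming from the quasi-inverse data. -/
noncomputable def adjFF : F' ⊣ SF.F := (CategoryTheory.Equivalence.mk F' SF.F ε.symm η).toAdjunction

variable (X : S) (Y : T)

/-- Precomposition with the unit of `i^* ⊣ i_*`, as a linear map. -/
noncomputable def lamLin :
    (R.iSt.obj (R.iUp.obj Y) ⟶ R.iSt.obj ((R.iSt ⋙ SF.F ⋙ R.iSh).obj X)) →ₗ[k]
      (Y ⟶ R.iSt.obj ((R.iSt ⋙ SF.F ⋙ R.iSh).obj X)) :=
  Linear.leftComp k _ (R.adj₁.unit.app Y)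

/-- Postcomposition with the counit of `i_* ⊣ i^!` at `F i_* X`, as a linear map. -/
noncomputable def rhoLin :
    (R.iSt.obj (R.iUp.obj Y) ⟶ R.iSt.obj ((R.iSt ⋙ SF.F ⋙ R.iSh).obj X)) →ₗ[k]
      (R.iSt.obj (R.iUp.obj Y) ⟶ SF.F.obj (R.iSt.obj X)) :=
  Linear.rightComp k _ (R.adj₂.counit.app (SF.F.obj (R.iSt.obj X)))

lemma lamLin_bijective : Function.Bijective (lamLin R SF X Y) := by
  have h : ⇑(lamLin R SF X Y) =
      ⇑((R.fullyFaithful_iSt.homEquiv.symm).trans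
        (R.adj₁.homEquiv Y ((R.iSt ⋙ SF.F ⋙ R.iSh).obj X))) := by
    funext w
    simp [lamLin, Adjunction.homEquiv_unit, Functor.FullyFaithful.homEquiv]
  rw [h]
  exact Equiv.bijective _

lemma rhoLin_bijective : Function.Bijective (rhoLin R SF X Y) := by
  have h : ⇑(rhoLin R SF X Y) =
      ⇑((R.fullyFaithful_iSt.homEquiv.symm).trans
        (R.adj₂.homEquiv (R.iUp.obj Y) (SF.F.obj (R.iSt.obj X))).symm) := by
    funext w
    simp [rhoLin, Adjunction.homEquiv_counit, Functor.FullyFaithful.homEquiv]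
  rw [h]
  exact Equiv.bijective _

/-- λ' as a linear equivalence. -/
noncomputable def lamEq :
    (R.iSt.obj (R.iUp.obj Y) ⟶ R.iSt.obj ((R.iSt ⋙ SF.F ⋙ R.iSh).obj X)) ≃ₗ[k]
      (Y ⟶ R.iSt.obj ((R.iSt ⋙ SF.F ⋙ R.iSh).obj X)) :=
  LinearEquiv.ofBijective _ (lamLin_bijective R SF X Y)

/-- ρ' as a linear equivalence. -/
noncomputable def rhoEq :
    (R.iSt.obj (R.iUp.obj Y) ⟶ R.iSt.obj ((R.iSt ⋙ SF.F ⋙ R.iSh).obj X)) ≃ₗ[k]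
      (R.iSt.obj (R.iUp.obj Y) ⟶ SF.F.obj (R.iSt.obj X)) :=
  LinearEquiv.ofBijective _ (rhoLin_bijective R SF X Y)

/-- The linear equivalence `Hom(Y, i_* G X) ≃ Hom(i_* i^* Y, F i_* X)`. -/
noncomputable def Leq :
    (Y ⟶ R.iSt.obj ((R.iSt ⋙ SF.F ⋙ R.iSh).obj X)) ≃ₗ[k]
      (R.iSt.obj (R.iUp.obj Y) ⟶ SF.F.obj (R.iSt.obj X)) :=
  (lamEq R SF X Y).symm ≪≫ₗ rhoEq R SF X Y

/-- The main equivalence. -/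
noncomputable def bigE :
    (F'.obj (R.iSt.obj ((R.iSt ⋙ SF.F ⋙ R.iSh).obj X)) ⟶ Y) ≃ (X ⟶ R.iUp.obj Y) :=
  ((adjFF SF F' η ε).homEquiv (R.iSt.obj ((R.iSt ⋙ SF.F ⋙ R.iSh).obj X)) Y).trans <|
    (((Module.evalEquiv k
        (R.iSt.obj ((R.iSt ⋙ SF.F ⋙ R.iSh).obj X) ⟶ SF.F.obj Y)) ≪≫ₗ
      (SF.rightSerre.equiv Y (R.iSt.obj ((R.iSt ⋙ SF.F ⋙ R.iSh).obj X))).dualMap ≪≫ₗ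
      (Leq R SF X Y).symm.dualMap ≪≫ₗ
      (SF.rightSerre.equiv (R.iSt.obj X) (R.iSt.obj (R.iUp.obj Y))).symm).toEquiv.trans
      (R.fullyFaithful_iSt.homEquiv (X := X) (Y := R.iUp.obj Y)).symm)

lemma key (φ : F'.obj (R.iSt.obj ((R.iSt ⋙ SF.F ⋙ R.iSh).obj X)) ⟶ Y)
    (v : R.iSt.obj (R.iUp.obj Y) ⟶ R.iSt.obj ((R.iSt ⋙ SF.F ⋙ R.iSh).obj X)) :
    SF.rightSerre.equiv (R.iSt.obj X) (R.iSt.obj (R.iUp.obj Y))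
        (R.iSt.map (bigE R SF F' η ε X Y φ))
        (v ≫ R.adj₂.counit.app (SF.F.obj (R.iSt.obj X))) =
      SF.rightSerre.equiv Y (R.iSt.obj ((R.iSt ⋙ SF.F ⋙ R.iSh).obj X))
        (R.adj₁.unit.app Y ≫ v)
        ((adjFF SF F' η ε).homEquiv _ Y φ) := by
  set ψ := (adjFF SF F' η ε).homEquiv (R.iSt.obj ((R.iSt ⋙ SF.F ⋙ R.iSh).obj X)) Y φ with hψ
  have h1 : R.iSt.map (bigE R SF F' η ε X Y φ) =
      (SF.rightSerre.equiv (R.iSt.obj X) (R.iSt.obj (R.iUp.obj Y))).symm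
        ((Leq R SF X Y).symm.dualMap
          ((SF.rightSerre.equiv Y (R.iSt.obj ((R.iSt ⋙ SF.F ⋙ R.iSh).obj X))).dualMap
            (Module.evalEquiv k _ ψ))) := by
    simp [bigE, hψ, Functor.FullyFaithful.homEquiv]
  rw [h1, LinearEquiv.apply_symm_apply, LinearEquiv.dualMap_apply]
  have h2 : (Leq R SF X Y).symm (v ≫ R.adj₂.counit.app (SF.F.obj (R.iSt.obj X))) =
      R.adj₁.unit.app Y ≫ v := by
    have hv : v ≫ R.adj₂.counit.app (SF.F.obj (R.iSt.obj X)) = rhoEq R SF X Y v := rfl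
    rw [hv]
    show ((rhoEq R SF X Y).symm ≪≫ₗ lamEq R SF X Y) (rhoEq R SF X Y v) =
      R.adj₁.unit.app Y ≫ v
    rw [LinearEquiv.trans_apply, LinearEquiv.symm_apply_apply]
    rfl
  rw [h2, LinearEquiv.dualMap_apply, Module.evalEquiv_apply, Module.Dual.eval_apply]

lemma uniq (f f' : X ⟶ R.iUp.obj Y)
    (h : ∀ v : R.iSt.obj (R.iUp.obj Y) ⟶ R.iSt.obj ((R.iSt ⋙ SF.F ⋙ R.iSh).obj X),
      SF.rightSerre.equiv (R.iSt.obj X) (R.iSt.obj (R.iUp.obj Y)) (R.iSt.map f)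
          (v ≫ R.adj₂.counit.app (SF.F.obj (R.iSt.obj X))) =
        SF.rightSerre.equiv (R.iSt.obj X) (R.iSt.obj (R.iUp.obj Y)) (R.iSt.map f')
          (v ≫ R.adj₂.counit.app (SF.F.obj (R.iSt.obj X)))) : f = f' := by
  apply R.fullyFaithful_iSt.map_injective
  apply (SF.rightSerre.equiv (R.iSt.obj X) (R.iSt.obj (R.iUp.obj Y))).injective
  apply LinearMap.ext
  intro w
  obtain ⟨v, rfl⟩ := (rhoLin_bijective R SF X Y).surjective w
  exact h v

end RecSerreAux

open RecSerreAux in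
/-- Given a recollement `(S, T, U)` and a Serre functor `F` on `T` with quasi-inverse `F'`,
there are isomorphisms `Hom_T(F' i_* G X, Y) ≅ Hom_S(X, i^* Y)`, natural in `X : S` and
`Y : T`, where `G := i^! ∘ F ∘ i_*` is the induced Serre functor on `S`. -/
theorem recollement_hom_equiv_natural
    {k : Type u₄} [Field k]
    {S : Type u₁} {T : Type u₂} {U : Type u₃}
    [Category.{v₁} S] [Category.{v₂} T] [Category.{v₃} U]
    [HasZeroObject S] [HasZeroObject T] [HasZeroObject U]
    [Preadditive S] [Preadditive T] [Preadditive U]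
    [CategoryTheory.Linear k S] [CategoryTheory.Linear k T] [CategoryTheory.Linear k U]
    [HasShift S ℤ] [HasShift T ℤ] [HasShift U ℤ]
    [∀ n : ℤ, (shiftFunctor S n).Additive] [∀ n : ℤ, (shiftFunctor T n).Additive]
    [∀ n : ℤ, (shiftFunctor U n).Additive]
    [Pretriangulated S] [Pretriangulated T] [Pretriangulated U]
    [EssentiallySmall.{v₁} S] [EssentiallySmall.{v₂} T] [EssentiallySmall.{v₃} U]
    [∀ X Y : S, FiniteDimensional k (X ⟶ Y)]
    [∀ X Y : T, FiniteDimensional k (X ⟶ Y)]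
    [∀ X Y : U, FiniteDimensional k (X ⟶ Y)]
    [IsIdempotentComplete T]
    (R : Recollement S T U)
    (SF : SerreFunctor k T) (F' : T ⥤ T)
    (η : SF.F ⋙ F' ≅ 𝟭 T) (ε : F' ⋙ SF.F ≅ 𝟭 T) :
    ∃ e : ∀ (X : S) (Y : T),
        (F'.obj (R.iSt.obj ((R.iSt ⋙ SF.F ⋙ R.iSh).obj X)) ⟶ Y) ≃ (X ⟶ R.iUp.obj Y),
      (∀ (X : S) (Y Y' : T) (φ : F'.obj (R.iSt.obj ((R.iSt ⋙ SF.F ⋙ R.iSh).obj X)) ⟶ Y)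
          (g : Y ⟶ Y'), e X Y' (φ ≫ g) = e X Y φ ≫ R.iUp.map g) ∧
      (∀ (X X' : S) (Y : T) (f : X' ⟶ X)
          (φ : F'.obj (R.iSt.obj ((R.iSt ⋙ SF.F ⋙ R.iSh).obj X)) ⟶ Y),
        e X' Y (F'.map (R.iSt.map ((R.iSt ⋙ SF.F ⋙ R.iSh).map f)) ≫ φ) = f ≫ e X Y φ) := by
  classical
  refine ⟨fun X Y => RecSerreAux.bigE R SF F' η ε X Y, ?_, ?_⟩
  · intro X Y Y' φ g
    apply RecSerreAux.uniq R SF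
    intro v'
    have hunit : g ≫ R.adj₁.unit.app Y' =
        R.adj₁.unit.app Y ≫ R.iSt.map (R.iUp.map g) := by
      simpa using R.adj₁.unit.naturality g
    calc SF.rightSerre.equiv (R.iSt.obj X) (R.iSt.obj (R.iUp.obj Y'))
          (R.iSt.map (RecSerreAux.bigE R SF F' η ε X Y' (φ ≫ g)))
          (v' ≫ R.adj₂.counit.app (SF.F.obj (R.iSt.obj X)))
        = SF.rightSerre.equiv Y' (R.iSt.obj ((R.iSt ⋙ SF.F ⋙ R.iSh).obj X))
            (R.adj₁.unit.app Y' ≫ v')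
            ((adjFF SF F' η ε).homEquiv _ Y' (φ ≫ g)) := RecSerreAux.key R SF F' η ε X Y' (φ ≫ g) v'
      _ = SF.rightSerre.equiv Y' (R.iSt.obj ((R.iSt ⋙ SF.F ⋙ R.iSh).obj X))
            (R.adj₁.unit.app Y' ≫ v')
            ((adjFF SF F' η ε).homEquiv _ Y φ ≫ SF.F.map g) := by
          rw [Adjunction.homEquiv_naturality_right]
      _ = SF.rightSerre.equiv Y (R.iSt.obj ((R.iSt ⋙ SF.F ⋙ R.iSh).obj X))
            (g ≫ R.adj₁.unit.app Y' ≫ v')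
            ((adjFF SF F' η ε).homEquiv _ Y φ) :=
          (SF.rightSerre.naturality_left g _ _).symm
      _ = SF.rightSerre.equiv Y (R.iSt.obj ((R.iSt ⋙ SF.F ⋙ R.iSh).obj X))
            (R.adj₁.unit.app Y ≫ R.iSt.map (R.iUp.map g) ≫ v')
            ((adjFF SF F' η ε).homEquiv _ Y φ) := by
          rw [← Category.assoc, hunit, Category.assoc]
      _ = SF.rightSerre.equiv (R.iSt.obj X) (R.iSt.obj (R.iUp.obj Y))
            (R.iSt.map (RecSerreAux.bigE R SF F' η ε X Y φ))
            ((R.iSt.map (R.iUp.map g) ≫ v') ≫ R.adj₂.counit.app (SF.F.obj (R.iSt.obj X))) := by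
          rw [← RecSerreAux.key R SF F' η ε X Y φ (R.iSt.map (R.iUp.map g) ≫ v')]
      _ = SF.rightSerre.equiv (R.iSt.obj X) (R.iSt.obj (R.iUp.obj Y'))
            (R.iSt.map (RecSerreAux.bigE R SF F' η ε X Y φ) ≫ R.iSt.map (R.iUp.map g))
            (v' ≫ R.adj₂.counit.app (SF.F.obj (R.iSt.obj X))) := by
          rw [SF.rightSerre.naturality_right, Category.assoc]
      _ = SF.rightSerre.equiv (R.iSt.obj X) (R.iSt.obj (R.iUp.obj Y'))
            (R.iSt.map (RecSerreAux.bigE R SF F' η ε X Y φ ≫ R.iUp.map g))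
            (v' ≫ R.adj₂.counit.app (SF.F.obj (R.iSt.obj X))) := by
          rw [Functor.map_comp]
  · intro X X' Y f φ
    apply RecSerreAux.uniq R SF
    intro v
    have hcounit : R.iSt.map ((R.iSt ⋙ SF.F ⋙ R.iSh).map f) ≫
          R.adj₂.counit.app (SF.F.obj (R.iSt.obj X)) =
        R.adj₂.counit.app (SF.F.obj (R.iSt.obj X')) ≫ SF.F.map (R.iSt.map f) := by
      simpa using R.adj₂.counit.naturality (SF.F.map (R.iSt.map f))
    calc SF.rightSerre.equiv (R.iSt.obj X') (R.iSt.obj (R.iUp.obj Y))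
          (R.iSt.map (RecSerreAux.bigE R SF F' η ε X' Y
            (F'.map (R.iSt.map ((R.iSt ⋙ SF.F ⋙ R.iSh).map f)) ≫ φ)))
          (v ≫ R.adj₂.counit.app (SF.F.obj (R.iSt.obj X')))
        = SF.rightSerre.equiv Y (R.iSt.obj ((R.iSt ⋙ SF.F ⋙ R.iSh).obj X'))
            (R.adj₁.unit.app Y ≫ v)
            ((adjFF SF F' η ε).homEquiv _ Y
              (F'.map (R.iSt.map ((R.iSt ⋙ SF.F ⋙ R.iSh).map f)) ≫ φ)) :=
          RecSerreAux.key R SF F' η ε X' Y _ v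
      _ = SF.rightSerre.equiv Y (R.iSt.obj ((R.iSt ⋙ SF.F ⋙ R.iSh).obj X'))
            (R.adj₁.unit.app Y ≫ v)
            (R.iSt.map ((R.iSt ⋙ SF.F ⋙ R.iSh).map f) ≫
              (adjFF SF F' η ε).homEquiv _ Y φ) := by
          rw [Adjunction.homEquiv_naturality_left]
      _ = SF.rightSerre.equiv Y (R.iSt.obj ((R.iSt ⋙ SF.F ⋙ R.iSh).obj X))
            ((R.adj₁.unit.app Y ≫ v) ≫ R.iSt.map ((R.iSt ⋙ SF.F ⋙ R.iSh).map f))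
            ((adjFF SF F' η ε).homEquiv _ Y φ) :=
          (SF.rightSerre.naturality_right _ _ _).symm
      _ = SF.rightSerre.equiv Y (R.iSt.obj ((R.iSt ⋙ SF.F ⋙ R.iSh).obj X))
            (R.adj₁.unit.app Y ≫ v ≫ R.iSt.map ((R.iSt ⋙ SF.F ⋙ R.iSh).map f))
            ((adjFF SF F' η ε).homEquiv _ Y φ) := by
          rw [Category.assoc]
      _ = SF.rightSerre.equiv (R.iSt.obj X) (R.iSt.obj (R.iUp.obj Y))
            (R.iSt.map (RecSerreAux.bigE R SF F' η ε X Y φ))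
            ((v ≫ R.iSt.map ((R.iSt ⋙ SF.F ⋙ R.iSh).map f)) ≫
              R.adj₂.counit.app (SF.F.obj (R.iSt.obj X))) := by
          rw [← RecSerreAux.key R SF F' η ε X Y φ
            (v ≫ R.iSt.map ((R.iSt ⋙ SF.F ⋙ R.iSh).map f))]
      _ = SF.rightSerre.equiv (R.iSt.obj X) (R.iSt.obj (R.iUp.obj Y))
            (R.iSt.map (RecSerreAux.bigE R SF F' η ε X Y φ))
            ((v ≫ R.adj₂.counit.app (SF.F.obj (R.iSt.obj X'))) ≫ SF.F.map (R.iSt.map f)) := by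
          rw [Category.assoc, hcounit, ← Category.assoc]
      _ = SF.rightSerre.equiv (R.iSt.obj X') (R.iSt.obj (R.iUp.obj Y))
            (R.iSt.map f ≫ R.iSt.map (RecSerreAux.bigE R SF F' η ε X Y φ))
            (v ≫ R.adj₂.counit.app (SF.F.obj (R.iSt.obj X'))) := by
          rw [SF.rightSerre.naturality_left]
      _ = SF.rightSerre.equiv (R.iSt.obj X') (R.iSt.obj (R.iUp.obj Y))
            (R.iSt.map (f ≫ RecSerreAux.bigE R SF F' η ε X Y φ))
            (v ≫ R.adj₂.counit.app (SF.F.obj (R.iSt.obj X'))) := by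
          rw [Functor.map_comp]
end
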